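/- Let R be a commutative ring of characteristic p with p-generating set x = x_1,...,x_n, and let R' = R[X_1,...,X_n]/(X_i^p - x_i) with maps ι : R → R' and φ : R' → R as in Gabber's first-step construction. Then R is reduced and x_1,...,x_n form a p-basis of R if and only if φ : R' → R is an isomorphism. -/

import Mathlib

/-- The image of the Frobenius `r ↦ r^p` of `R`, as a subring. -/
def pPowers (R : Type*) [CommRing R] (p : ℕ) : Subring R :=
  Subring.closure (Set.range fun r : R => r ^ p)

open MvPolynomial

section GabberAux

variable {R : Type*} [CommRing R]

/-- Embed an exponent vector with entries `< p` as a finitely supported function. -/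
noncomputable def gfsEmb (p n : ℕ) (b : Fin n → Fin p) : Fin n →₀ ℕ :=
  Finsupp.equivFunOnFinite.symm fun i => (b i : ℕ)

@[simp] lemma gfsEmb_apply (p n : ℕ) (b : Fin n → Fin p) (i : Fin n) :
    gfsEmb p n b i = b i := rfl

lemma gfsEmb_injective (p n : ℕ) : Function.Injective (gfsEmb p n) := by
  intro b b' h
  funext i
  have := DFunLike.congr_fun h i
  simpa [gfsEmb_apply, Fin.val_inj] using this

/-- Reduce an exponent vector mod `p`. -/
noncomputable def gfsRed (p n : ℕ) (a : Fin n →₀ ℕ) : Fin n →₀ ℕ :=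
  Finsupp.equivFunOnFinite.symm fun i => a i % p

@[simp] lemma gfsRed_apply (p n : ℕ) (a : Fin n →₀ ℕ) (i : Fin n) :
    gfsRed p n a i = a i % p := rfl

/-- The "weight" of an exponent vector: `∏ x i ^ (a i / p)`. -/
noncomputable def gfsWt (p : ℕ) {n : ℕ} (x : Fin n → R) (a : Fin n →₀ ℕ) : R :=
  ∏ i, x i ^ (a i / p)

/-- The additive normal-form reduction map, sending `monomial a c` to
`monomial (a % p) (c * ∏ x i ^ (a i / p))`. -/
noncomputable def gfsN (p : ℕ) {n : ℕ} (x : Fin n → R) :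
    MvPolynomial (Fin n) R →+ MvPolynomial (Fin n) R where
  toFun f := Finsupp.sum (AddMonoidAlgebra.coeff f) fun a c => monomial (gfsRed p n a) (c * gfsWt p x a)
  map_zero' := Finsupp.sum_zero_index
  map_add' f g := by
    exact Finsupp.sum_add_index'
      (fun a => by rw [zero_mul, map_zero])
      (fun a b₁ b₂ => by rw [add_mul, map_add])

lemma gfsN_apply (p : ℕ) {n : ℕ} (x : Fin n → R) (f : MvPolynomial (Fin n) R) :
    gfsN p x f = Finsupp.sum (AddMonoidAlgebra.coeff f) fun a c => monomial (gfsRed p n a) (c * gfsWt p x a) := rfl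

lemma gfsN_monomial (p : ℕ) {n : ℕ} (x : Fin n → R) (a : Fin n →₀ ℕ) (c : R) :
    gfsN p x (monomial a c) = monomial (gfsRed p n a) (c * gfsWt p x a) := by
  rw [gfsN_apply]
  exact sum_monomial_eq (by rw [zero_mul, map_zero])

lemma gfsRed_add_single (p n : ℕ) (a : Fin n →₀ ℕ) (i : Fin n) :
    gfsRed p n (a + Finsupp.single i p) = gfsRed p n a := by
  ext j
  simp only [gfsRed_apply, Finsupp.add_apply, Finsupp.single_apply]
  by_cases h : i = j
  · subst h; simp [Nat.add_mod_right]
  · simp [h]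

lemma gfsWt_add_single (p : ℕ) (hp : 0 < p) {n : ℕ} (x : Fin n → R) (a : Fin n →₀ ℕ)
    (i : Fin n) : gfsWt p x (a + Finsupp.single i p) = x i * gfsWt p x a := by
  unfold gfsWt
  have key : ∀ j, (a + Finsupp.single i p) j / p = a j / p + (if j = i then 1 else 0) := by
    intro j
    simp only [Finsupp.add_apply, Finsupp.single_apply]
    by_cases h : i = j
    · subst h; simp [Nat.add_div_right _ hp]
    · have h' : ¬ (j = i) := fun hh => h hh.symm
      simp [h, h']
  calc ∏ j, x j ^ ((a + Finsupp.single i p) j / p)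
      = ∏ j, (x j ^ (a j / p) * x j ^ (if j = i then 1 else 0)) := by
        refine Finset.prod_congr rfl fun j _ => ?_
        rw [key j, pow_add]
    _ = (∏ j, x j ^ (a j / p)) * ∏ j, x j ^ (if j = i then 1 else 0) := by
        rw [Finset.prod_mul_distrib]
    _ = x i * ∏ j, x j ^ (a j / p) := by
        rw [mul_comm]
        congr 1
        have : ∀ j : Fin n, x j ^ (if j = i then 1 else 0) = if j = i then x j else 1 := by
          intro j; by_cases h : j = i <;> simp [h]
        rw [Finset.prod_congr rfl fun j _ => this j, Finset.prod_ite_eq' Finset.univ i x]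
        simp

/-- `gfsN` kills multiples of the generators `X i ^ p - C (x i)`. -/
lemma gfsN_mul_gen (p : ℕ) (hp : 0 < p) {n : ℕ} (x : Fin n → R)
    (g : MvPolynomial (Fin n) R) (i : Fin n) :
    gfsN p x (g * (X i ^ p - C (x i))) = 0 := by
  induction g using MvPolynomial.induction_on' with
  | add f g hf hg => rw [add_mul, map_add, hf, hg, add_zero]
  | monomial a c =>
    have h1 : (monomial a c) * (X i ^ p) = monomial (a + Finsupp.single i p) c := by
      rw [X_pow_eq_monomial, monomial_mul, mul_one]
    have h2 : (monomial a c) * C (x i) = monomial a (c * x i) := by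
      rw [C_apply, monomial_mul, add_zero]
    rw [mul_sub, h1, h2, map_sub, gfsN_monomial, gfsN_monomial,
      gfsRed_add_single, gfsWt_add_single p hp, sub_eq_zero]
    ring_nf

/-- `gfsN` kills the ideal `I`. -/
lemma gfsN_eq_zero_of_mem (p : ℕ) (hp : 0 < p) {n : ℕ} (x : Fin n → R)
    (f : MvPolynomial (Fin n) R)
    (hf : f ∈ Ideal.span (Set.range fun i => X i ^ p - C (x i))) :
    gfsN p x f = 0 := by
  obtain ⟨c, hc⟩ := Ideal.mem_span_range_iff_exists_fun.mp hf
  rw [← hc, map_sum]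
  refine Finset.sum_eq_zero fun i _ => gfsN_mul_gen p hp x (c i) i

/-- coefficients of `gfsN f` at exponents not all `< p` vanish. -/
lemma coeff_gfsN_eq_zero (p : ℕ) (hp : 0 < p) {n : ℕ} (x : Fin n → R)
    (f : MvPolynomial (Fin n) R)
    (m : Fin n →₀ ℕ) (hm : ∃ i, p ≤ m i) : coeff m (gfsN p x f) = 0 := by
  obtain ⟨i, hi⟩ := hm
  rw [gfsN_apply, Finsupp.sum, coeff_sum]
  refine Finset.sum_eq_zero fun a _ => ?_
  rw [coeff_monomial, if_neg]
  intro h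
  have h2 := congrArg (fun g : Fin n →₀ ℕ => g i) h
  simp only [gfsRed_apply] at h2
  have hlt : a i % p < p := Nat.mod_lt _ hp
  omega

/-- In the quotient, every polynomial equals its normal form. -/
lemma mk_gfsN (p : ℕ) {n : ℕ} (x : Fin n → R) (I : Ideal (MvPolynomial (Fin n) R))
    (hI : I = Ideal.span (Set.range fun i => X i ^ p - C (x i)))
    (f : MvPolynomial (Fin n) R) :
    Ideal.Quotient.mk I f = Ideal.Quotient.mk I (gfsN p x f) := by
  set mk := Ideal.Quotient.mk I with hmk
  have hXp : ∀ i : Fin n, (mk (X i)) ^ p = mk (C (x i)) := by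
    intro i
    have hmem : X i ^ p - C (x i) ∈ I := by
      rw [hI]; exact Ideal.subset_span ⟨i, rfl⟩
    have := (Ideal.Quotient.eq_zero_iff_mem).mpr hmem
    rw [map_sub, sub_eq_zero] at this
    rw [← map_pow]; exact this
  induction f using MvPolynomial.induction_on' with
  | add f g hf hg => rw [map_add, map_add, map_add, hf, hg]
  | monomial a c =>
    rw [gfsN_monomial, monomial_eq, monomial_eq]
    rw [Finsupp.prod_fintype _ _ (fun i => pow_zero _),
        Finsupp.prod_fintype _ _ (fun i => pow_zero _)]
    simp only [gfsRed_apply]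
    rw [map_mul, map_mul, map_prod, map_prod]
    have hC : mk (C (c * gfsWt p x a)) = mk (C c) * ∏ i, (mk (C (x i))) ^ (a i / p) := by
      rw [map_mul, map_mul]
      congr 1
      unfold gfsWt
      rw [map_prod, map_prod]
      refine Finset.prod_congr rfl fun i _ => ?_
      rw [map_pow, map_pow]
    rw [hC, mul_assoc, ← Finset.prod_mul_distrib]
    congr 1
    refine Finset.prod_congr rfl fun i _ => ?_
    rw [map_pow, map_pow, ← hXp i, ← pow_mul, ← pow_add]
    congr 1
    exact (Nat.div_add_mod' (a i) p).symm ▸ (by rw [Nat.div_add_mod])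

/-- A polynomial whose coefficients vanish outside exponents `< p` is the sum of its
monomials indexed by `Fin n → Fin p`. -/
lemma eq_sum_gfsEmb (p n : ℕ) (g : MvPolynomial (Fin n) R)
    (hg : ∀ m : Fin n →₀ ℕ, (∃ i, p ≤ m i) → coeff m g = 0) :
    g = ∑ b : Fin n → Fin p, monomial (gfsEmb p n b) (coeff (gfsEmb p n b) g) := by
  ext m
  rw [coeff_sum]
  by_cases hm : ∀ i, m i < p
  · have hb0 : gfsEmb p n (fun i => (⟨m i, hm i⟩ : Fin p)) = m := by
      ext i; simp [gfsEmb_apply]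
    rw [Finset.sum_eq_single (fun i => (⟨m i, hm i⟩ : Fin p))]
    · rw [coeff_monomial, if_pos hb0, hb0]
    · intro b _ hb
      rw [coeff_monomial, if_neg]
      intro h
      exact hb (gfsEmb_injective p n (h.trans hb0.symm))
    · intro h; exact absurd (Finset.mem_univ _) h
  · push_neg at hm
    obtain ⟨i, hi⟩ := hm
    rw [hg m ⟨i, hi⟩]
    refine (Finset.sum_eq_zero fun b _ => ?_).symm
    rw [coeff_monomial, if_neg]
    intro h
    have := congrArg (fun g : Fin n →₀ ℕ => g i) h
    simp only [gfsEmb_apply] at this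
    omega

/-- Key injectivity lemma: a polynomial in normal form lying in `I` is zero. -/
lemma eq_zero_of_normal_form_mem (p : ℕ) (hp : 0 < p) {n : ℕ} (x : Fin n → R)
    (g : MvPolynomial (Fin n) R)
    (hg : ∀ m : Fin n →₀ ℕ, (∃ i, p ≤ m i) → coeff m g = 0)
    (hmem : g ∈ Ideal.span (Set.range fun i => X i ^ p - C (x i))) :
    g = 0 := by
  have h1 : gfsN p x g = 0 := gfsN_eq_zero_of_mem p hp x g hmem
  have h2 : gfsN p x g = g := by
    conv_lhs => rw [eq_sum_gfsEmb p n g hg]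
    rw [map_sum]
    conv_rhs => rw [eq_sum_gfsEmb p n g hg]
    refine Finset.sum_congr rfl fun b _ => ?_
    rw [gfsN_monomial]
    have hred : gfsRed p n (gfsEmb p n b) = gfsEmb p n b := by
      ext i; simp [Nat.mod_eq_of_lt (b i).2]
    have hwt : gfsWt p x (gfsEmb p n b) = 1 := by
      unfold gfsWt
      refine Finset.prod_eq_one fun i _ => ?_
      rw [Nat.div_eq_of_lt (by simpa using (b i).2), pow_zero]
    rw [hred, hwt, mul_one]
  rw [← h2, h1]

end GabberAux

/-- Let `R` be of characteristic `p` with `p`-generating set `x = x_1, …, x_n` and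
`R' = R[X_1, …, X_n]/(X_i^p - x_i)` with the map `φ : R' → R` of Gabber's first-step
construction (sending coefficients `r ↦ r^p` and `X̄_i ↦ x_i`).  Then `R` is reduced and
`x_1, …, x_n` form a `p`-basis of `R` (monomials `x^b`, `0 ≤ b_i ≤ p-1`, linearly
independent over `R^p`) if and only if `φ` is an isomorphism. -/
theorem gabber_first_step_iso_iff {R : Type*} [CommRing R] (p : ℕ) [Fact p.Prime] [CharP R p]
    (n : ℕ) (x : Fin n → R)
    (hgen : Subring.closure (Set.range (fun r : R => r ^ p) ∪ Set.range x) = ⊤)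
    (I : Ideal (MvPolynomial (Fin n) R))
    (hI : I = Ideal.span (Set.range fun i => MvPolynomial.X i ^ p - MvPolynomial.C (x i)))
    (φ : (MvPolynomial (Fin n) R ⧸ I) →+* R)
    (hφC : ∀ r : R, φ (Ideal.Quotient.mk I (MvPolynomial.C r)) = r ^ p)
    (hφX : ∀ i : Fin n, φ (Ideal.Quotient.mk I (MvPolynomial.X i)) = x i) :
    (IsReduced R ∧
        LinearIndependent (pPowers R p) (fun b : Fin n → Fin p => ∏ i, x i ^ ((b i : ℕ))))
      ↔ Function.Bijective φ := by
  have hp : 0 < p := (Fact.out : p.Prime).pos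
  have hp1 : 1 < p := (Fact.out : p.Prime).one_lt
  set mk := Ideal.Quotient.mk I with hmk
  -- φ is always surjective
  have hsurj : Function.Surjective φ := by
    intro r
    have hle : Subring.closure (Set.range (fun r : R => r ^ p) ∪ Set.range x) ≤ φ.range := by
      rw [Subring.closure_le]
      rintro y (⟨s, rfl⟩ | ⟨i, rfl⟩)
      · exact ⟨mk (MvPolynomial.C s), hφC s⟩
      · exact ⟨mk (MvPolynomial.X i), hφX i⟩
    rw [hgen] at hle
    exact hle (Subring.mem_top r)
  -- membership in pPowers
  have hpPow : ∀ y : R, y ∈ pPowers R p → ∃ r : R, r ^ p = y := by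
    intro y hy
    have hle : Subring.closure (Set.range fun r : R => r ^ p) ≤ (frobenius R p).range := by
      rw [Subring.closure_le]
      rintro _ ⟨s, rfl⟩
      exact ⟨s, rfl⟩
    obtain ⟨r, hr⟩ := hle hy
    exact ⟨r, hr⟩
  have hpPowMem : ∀ r : R, r ^ p ∈ pPowers R p := fun r =>
    Subring.subset_closure ⟨r, rfl⟩
  -- smul of pPowers on R
  have hsmul : ∀ (a : pPowers R p) (r : R), a • r = (a : R) * r := fun a r => rfl
  -- the φ formula on monomials
  have hφmono : ∀ (a : Fin n →₀ ℕ) (r : R),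
      φ (mk (MvPolynomial.monomial a r)) = r ^ p * ∏ i, x i ^ (a i) := by
    intro a r
    rw [MvPolynomial.monomial_eq, Finsupp.prod_fintype _ _ (fun i => pow_zero _),
      map_mul, map_mul, hφC, map_prod, map_prod]
    congr 1
    refine Finset.prod_congr rfl fun i _ => ?_
    rw [map_pow, map_pow, hφX]
  -- φ applied to a normal-form sum
  have hφsum : ∀ c : (Fin n → Fin p) → R,
      φ (mk (∑ b : Fin n → Fin p, MvPolynomial.monomial (gfsEmb p n b) (c b)))
        = ∑ b : Fin n → Fin p, (c b) ^ p * ∏ i, x i ^ ((b i : ℕ)) := by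
    intro c
    rw [map_sum, map_sum]
    refine Finset.sum_congr rfl fun b _ => ?_
    rw [hφmono]
    congr 1
  -- reduction of nilpotents: r ^ p = 0 → (injective → r = 0)
  constructor
  · rintro ⟨hred, hli⟩
    refine ⟨?_, hsurj⟩
    rw [injective_iff_map_eq_zero]
    intro z hz
    obtain ⟨f, rfl⟩ := Ideal.Quotient.mk_surjective z
    rw [mk_gfsN p x I hI f] at hz ⊢
    set g := gfsN p x f with hg
    have hgsupp : ∀ m : Fin n →₀ ℕ, (∃ i, p ≤ m i) → MvPolynomial.coeff m g = 0 :=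
      fun m hm => coeff_gfsN_eq_zero p hp x f m hm
    have hdecomp := eq_sum_gfsEmb p n g hgsupp
    set c : (Fin n → Fin p) → R := fun b => MvPolynomial.coeff (gfsEmb p n b) g with hc
    rw [hdecomp, hφsum] at hz
    have hli' := Fintype.linearIndependent_iff.mp hli
      (fun b => ⟨(c b) ^ p, hpPowMem (c b)⟩) ?_
    · have hc0 : ∀ b, c b = 0 := by
        intro b
        have := hli' b
        have hpow : (c b) ^ p = 0 := congrArg Subtype.val this
        exact hred.eq_zero _ ⟨p, hpow⟩
      have : g = 0 := by
        rw [hdecomp]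
        refine Finset.sum_eq_zero fun b _ => ?_
        have hb := hc0 b
        simp only [hc] at hb
        rw [hb, map_zero]
      rw [this, map_zero]
    · rw [← hz]
      refine Finset.sum_congr rfl fun b _ => ?_
      rw [hsmul]
  · intro hbij
    have hinj := hbij.1
    -- key: r ^ p = 0 → r = 0
    have hkey : ∀ r : R, r ^ p = 0 → r = 0 := by
      intro r hr
      have h0 : φ (mk (MvPolynomial.C r)) = 0 := by rw [hφC, hr]
      have h1 : mk (MvPolynomial.C r) = 0 :=
        (injective_iff_map_eq_zero φ).mp hinj _ h0
      have h2 : MvPolynomial.C r ∈ I := Ideal.Quotient.eq_zero_iff_mem.mp h1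
      rw [hI] at h2
      have h3 : (MvPolynomial.C r : MvPolynomial (Fin n) R) = 0 := by
        refine eq_zero_of_normal_form_mem p hp x _ ?_ h2
        intro m hm
        obtain ⟨i, hi⟩ := hm
        rw [MvPolynomial.coeff_C, if_neg]
        intro h
        have := congrArg (fun g : Fin n →₀ ℕ => g i) h
        simp only [Finsupp.coe_zero, Pi.zero_apply] at this
        omega
      exact (MvPolynomial.C_injective (Fin n) R) (by rw [h3, map_zero])
    constructor
    · -- reduced
      constructor
      intro r hr
      obtain ⟨m, hm⟩ := hr
      have hpm : r ^ (p ^ m) = 0 := by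
        have hle : m ≤ p ^ m := le_of_lt (Nat.lt_pow_self (n := m) hp1)
        calc r ^ (p ^ m) = r ^ m * r ^ (p ^ m - m) := by
              rw [← pow_add, Nat.add_sub_cancel' hle]
          _ = 0 := by rw [hm, zero_mul]
      clear hm
      induction m with
      | zero => simpa using hpm
      | succ k ih =>
        refine ih ?_
        refine hkey _ ?_
        rw [← pow_mul, ← pow_succ]
        exact hpm
    · -- linear independence
      rw [Fintype.linearIndependent_iff]
      intro g hg b
      choose c hcspec using fun b => hpPow _ (g b).2
      have hzero : φ (mk (∑ b : Fin n → Fin p,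
          MvPolynomial.monomial (gfsEmb p n b) (c b))) = 0 := by
        rw [hφsum, ← hg]
        refine Finset.sum_congr rfl fun b _ => ?_
        rw [hsmul, hcspec]
      have h1 : mk (∑ b : Fin n → Fin p,
          MvPolynomial.monomial (gfsEmb p n b) (c b)) = 0 :=
        (injective_iff_map_eq_zero φ).mp hinj _ hzero
      have h2 : (∑ b : Fin n → Fin p,
          MvPolynomial.monomial (gfsEmb p n b) (c b)) ∈ I :=
        Ideal.Quotient.eq_zero_iff_mem.mp h1
      rw [hI] at h2
      have h3 : (∑ b : Fin n → Fin p,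
          MvPolynomial.monomial (gfsEmb p n b) (c b)) = 0 := by
        refine eq_zero_of_normal_form_mem p hp x _ ?_ h2
        intro m hm
        obtain ⟨i, hi⟩ := hm
        rw [MvPolynomial.coeff_sum]
        refine Finset.sum_eq_zero fun b _ => ?_
        rw [MvPolynomial.coeff_monomial, if_neg]
        intro h
        have := congrArg (fun g : Fin n →₀ ℕ => g i) h
        simp only [gfsEmb_apply] at this
        omega
      have h4 : c b = 0 := by
        have := congrArg (MvPolynomial.coeff (gfsEmb p n b)) h3
        rw [MvPolynomial.coeff_sum, MvPolynomial.coeff_zero] at this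
        rw [Finset.sum_eq_single b] at this
        · rwa [MvPolynomial.coeff_monomial, if_pos rfl] at this
        · intro b' _ hb'
          rw [MvPolynomial.coeff_monomial, if_neg]
          exact fun h => hb' (gfsEmb_injective p n h)
        · intro h; exact absurd (Finset.mem_univ _) h
      ext
      rw [← hcspec b, h4]
      simp [zero_pow hp.ne']
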